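/- In the two-candidate P_2-voter model, if p̂_{22}/p̂_{21} > (p_{22}/p_{21})·((1/2 − ε)/(1/2 + ε)), then there exists N such that for all n ≥ N, P(Z > 0) ≤ exp(−2·(p̂_{22}·p̂_{21}/(p̂_{22} + p̂_{21}))²·√n); i.e., a voter of class P_2 perceives a_2 as winner with probability tending to 0 as n → ∞, so she is not surprised with high probability. -/

import Mathlib

open MeasureTheory ProbabilityTheory

lemma exp_le_quad {x : ℝ} (hx : |x| ≤ 1) : Real.exp x ≤ 1 + x + x ^ 2 := by
  have h := Real.exp_bound hx (n := 2) (by norm_num)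
  have hsum : ∑ m ∈ Finset.range 2, x ^ m / m.factorial = 1 + x := by
    simp [Finset.sum_range_succ]
  rw [hsum] at h
  have h2 : |x| ^ 2 = x ^ 2 := sq_abs x
  have h3 := (abs_sub_le_iff.1 h).1
  norm_num [Nat.factorial] at h3
  linarith only [h3, h2, sq_abs x, sq_nonneg x, abs_nonneg x, sq_nonneg (|x|)]

lemma mgf_three_point {Ω : Type*} [MeasurableSpace Ω] (μ : Measure Ω) [IsProbabilityMeasure μ]
    (X : Ω → ℝ) (hX : Measurable X) (x1 x2 : ℝ) (h12 : x1 ≠ x2) (h10 : x1 ≠ 0) (h20 : x2 ≠ 0)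
    (a b : ℝ) (hA : μ {ω | X ω = x1} = ENNReal.ofReal a)
    (hB : μ {ω | X ω = x2} = ENNReal.ofReal b)
    (hC : μ {ω | X ω = 0} = ENNReal.ofReal (1 - a - b))
    (ha : 0 ≤ a) (hb : 0 ≤ b) (hc : 0 ≤ 1 - a - b) (t : ℝ) :
    Integrable (fun ω => Real.exp (t * X ω)) μ ∧
      mgf X μ t = a * Real.exp (t * x1) + b * Real.exp (t * x2) + (1 - a - b) := by
  set A : Set Ω := X ⁻¹' {x1} with hAdef
  set B : Set Ω := X ⁻¹' {x2} with hBdef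
  set C : Set Ω := X ⁻¹' {0} with hCdef
  have hAm : MeasurableSet A := hX (measurableSet_singleton x1)
  have hBm : MeasurableSet B := hX (measurableSet_singleton x2)
  have hCm : MeasurableSet C := hX (measurableSet_singleton 0)
  have hμA : μ A = ENNReal.ofReal a := hA
  have hμB : μ B = ENNReal.ofReal b := hB
  have hμC : μ C = ENNReal.ofReal (1 - a - b) := hC
  have hdAB : Disjoint A B := by
    rw [Set.disjoint_left]
    rintro ω (h1 : X ω = x1) (h2 : X ω = x2)
    exact h12 (h1 ▸ h2 ▸ rfl)
  have hdAC : Disjoint A C := by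
    rw [Set.disjoint_left]
    rintro ω (h1 : X ω = x1) (h2 : X ω = 0)
    exact h10 (h1 ▸ h2 ▸ rfl)
  have hdBC : Disjoint B C := by
    rw [Set.disjoint_left]
    rintro ω (h1 : X ω = x2) (h2 : X ω = 0)
    exact h20 (h1 ▸ h2 ▸ rfl)
  have hunion : μ (A ∪ B ∪ C) = 1 := by
    rw [measure_union (hdAC.union_left hdBC) hCm, measure_union hdAB hBm,
      hμA, hμB, hμC, ← ENNReal.ofReal_add ha hb, ← ENNReal.ofReal_add (by linarith) hc]
    norm_num
  have hcompl : μ (A ∪ B ∪ C)ᶜ = 0 := by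
    rw [prob_compl_eq_one_sub ((hAm.union hBm).union hCm), hunion, tsub_self]
  set g : Ω → ℝ := fun ω =>
    A.indicator (fun _ => Real.exp (t * x1)) ω + B.indicator (fun _ => Real.exp (t * x2)) ω +
      C.indicator (fun _ => (1 : ℝ)) ω with hgdef
  have hae : (fun ω => Real.exp (t * X ω)) =ᵐ[μ] g := by
    have : ∀ᵐ ω ∂μ, ω ∈ A ∪ B ∪ C := by
      rw [MeasureTheory.ae_iff]
      exact hcompl
    filter_upwards [this] with ω hω
    rcases hω with (hω | hω) | hω
    · have hx : X ω = x1 := hω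
      have hnB : ω ∉ B := fun h => h12 (hx ▸ (h : X ω = x2) ▸ rfl)
      have hnC : ω ∉ C := fun h => h10 (hx ▸ (h : X ω = 0) ▸ rfl)
      simp [hgdef, Set.indicator_of_mem hω, Set.indicator_of_notMem hnB,
        Set.indicator_of_notMem hnC, hx]
    · have hx : X ω = x2 := hω
      have hnA : ω ∉ A := fun h => h12 ((h : X ω = x1) ▸ hx ▸ rfl)
      have hnC : ω ∉ C := fun h => h20 (hx ▸ (h : X ω = 0) ▸ rfl)
      simp [hgdef, Set.indicator_of_mem hω, Set.indicator_of_notMem hnA,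
        Set.indicator_of_notMem hnC, hx]
    · have hx : X ω = 0 := hω
      have hnA : ω ∉ A := fun h => h10 ((h : X ω = x1) ▸ hx ▸ rfl)
      have hnB : ω ∉ B := fun h => h20 ((h : X ω = x2) ▸ hx ▸ rfl)
      simp [hgdef, Set.indicator_of_mem hω, Set.indicator_of_notMem hnA,
        Set.indicator_of_notMem hnB, hx]
  have hgint : Integrable g μ :=
    (((integrable_const _).indicator hAm).add ((integrable_const _).indicator hBm)).add
      ((integrable_const _).indicator hCm)
  have hfint : Integrable (fun ω => Real.exp (t * X ω)) μ := hgint.congr hae.symm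
  refine ⟨hfint, ?_⟩
  have hAi : Integrable (fun ω => A.indicator (fun _ => Real.exp (t * x1)) ω) μ :=
    (integrable_const _).indicator hAm
  have hBi : Integrable (fun ω => B.indicator (fun _ => Real.exp (t * x2)) ω) μ :=
    (integrable_const _).indicator hBm
  have hCi : Integrable (fun ω => C.indicator (fun _ => (1 : ℝ)) ω) μ :=
    (integrable_const _).indicator hCm
  have hABi : Integrable (fun ω => A.indicator (fun _ => Real.exp (t * x1)) ω +
      B.indicator (fun _ => Real.exp (t * x2)) ω) μ := hAi.add hBi
  have : mgf X μ t = ∫ ω, g ω ∂μ := integral_congr_ae hae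
  rw [this, hgdef]
  rw [integral_add hABi hCi, integral_add hAi hBi,
    integral_indicator_const _ hAm, integral_indicator_const _ hBm,
    integral_indicator_const _ hCm, measureReal_def, measureReal_def, measureReal_def, hμA, hμB, hμC,
    ENNReal.toReal_ofReal ha, ENNReal.toReal_ofReal hb, ENNReal.toReal_ofReal hc]
  simp only [smul_eq_mul]
  ring

set_option maxHeartbeats 1000000 in
theorem surprise_two_candidates_P2_not_surprised
    {Ω : Type*} [MeasurableSpace Ω] (μ : Measure Ω) [IsProbabilityMeasure μ]
    (ε : ℝ) (hε : 0 < ε) (hε' : ε < 1/2)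
    (p22 p21 phat22 phat21 : ℝ)
    (hp22 : 0 < p22) (hp22' : p22 ≤ 1) (hp21 : 0 < p21) (hp21' : p21 ≤ 1)
    (hphat22 : 0 < phat22) (hphat22' : phat22 ≤ 1)
    (hphat21 : 0 < phat21) (hphat21' : phat21 ≤ 1)
    (Y : ℕ → Ω → ℝ) (hmeas : ∀ i, Measurable (Y i))
    (hindep : iIndepFun Y μ)
    (hY1 : ∀ i, μ {ω | Y i ω = 1/phat22} = ENNReal.ofReal ((1/2 - ε) * p22))
    (hY2 : ∀ i, μ {ω | Y i ω = -1/phat21} = ENNReal.ofReal ((1/2 + ε) * p21))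
    (hY0 : ∀ i, μ {ω | Y i ω = 0} =
      ENNReal.ofReal (1 - (1/2 - ε) * p22 - (1/2 + ε) * p21))
    (hcond : phat22 / phat21 > (p22 / p21) * ((1/2 - ε) / (1/2 + ε))) :
    ∃ N : ℕ, ∀ n : ℕ, N ≤ n →
      μ {ω | 0 < 1 + ∑ i ∈ Finset.range (n - 1), Y i ω} ≤
        ENNReal.ofReal
          (Real.exp (-2 * (phat22 * phat21 / (phat22 + phat21))^2 * Real.sqrt n)) := by
  set a := (1/2 - ε) * p22 with hadef
  set b := (1/2 + ε) * p21 with hbdef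
  clear_value a b
  have ha : 0 < a := by rw [hadef]; exact mul_pos (by linarith) hp22
  have hb : 0 < b := by rw [hbdef]; exact mul_pos (by linarith) hp21
  have hc : 0 ≤ 1 - a - b := by
    have h1 : a ≤ 1/2 - ε := by rw [hadef]; exact mul_le_of_le_one_right (by linarith) hp22'
    have h2 : b ≤ 1/2 + ε := by rw [hbdef]; exact mul_le_of_le_one_right (by linarith) hp21'
    linarith
  -- distinctness of the three values
  have hx1pos : (0:ℝ) < 1/phat22 := by positivity
  have hx2neg : -1/phat21 < 0 := by
    rw [neg_div]; simp only [neg_neg, neg_lt, neg_zero]; positivity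
  have h12 : (1/phat22 : ℝ) ≠ -1/phat21 := ne_of_gt (lt_trans hx2neg hx1pos)
  have h10 : (1/phat22 : ℝ) ≠ 0 := ne_of_gt hx1pos
  have h20 : (-1/phat21 : ℝ) ≠ 0 := ne_of_lt hx2neg
  have hmgf : ∀ (i : ℕ) (t : ℝ),
      Integrable (fun ω => Real.exp (t * Y i ω)) μ ∧
      mgf (Y i) μ t =
        a * Real.exp (t * (1/phat22)) + b * Real.exp (t * (-1/phat21)) + (1 - a - b) :=
    fun i t => mgf_three_point μ (Y i) (hmeas i) (1/phat22) (-1/phat21) h12 h10 h20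
      a b (hY1 i) (hY2 i) (hY0 i) ha.le hb.le hc t
  -- negative drift
  have heq : (p22/p21)*((1/2 - ε)/(1/2 + ε)) = a/b := by
    rw [hadef, hbdef]; field_simp
  rw [gt_iff_lt, heq, div_lt_div_iff₀ hb hphat21] at hcond
  set m : ℝ := a * (1/phat22) + b * (-1/phat21) with hmdef
  clear_value m
  have hm : m < 0 := by
    rw [hmdef]
    have h1 : a * (1/phat22) < b * (1/phat21) := by
      rw [mul_one_div, mul_one_div, div_lt_div_iff₀ hphat22 hphat21]
      linarith
    have h2 : b * (-1/phat21) = -(b * (1/phat21)) := by ring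
    linarith
  set K : ℝ := a * (1/phat22)^2 + b * (1/phat21)^2 with hKdef
  clear_value K
  have hK : 0 < K := by
    rw [hKdef]
    apply add_pos (mul_pos ha (by positivity)) (mul_pos hb (by positivity))
  set t : ℝ := min phat22 (min phat21 (-m/(2*K))) with htdef
  have ht : 0 < t := by
    apply lt_min hphat22 (lt_min hphat21 _)
    apply div_pos (by linarith) (by linarith)
  have ht22 : t ≤ phat22 := min_le_left _ _
  have ht21 : t ≤ phat21 := le_trans (min_le_right _ _) (min_le_left _ _)
  have htm : t ≤ -m/(2*K) := le_trans (min_le_right _ _) (min_le_right _ _)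
  clear_value t
  have hb1 : |t * (1/phat22)| ≤ 1 := by
    rw [abs_of_pos (mul_pos ht hx1pos), mul_one_div, div_le_one hphat22]
    exact ht22
  have hb2 : |t * (-1/phat21)| ≤ 1 := by
    have hrw : t * (-1/phat21) = -(t/phat21) := by ring
    rw [hrw, abs_neg, abs_of_pos (by positivity), div_le_one hphat21]
    exact ht21
  set M : ℝ := a * Real.exp (t * (1/phat22)) + b * Real.exp (t * (-1/phat21)) + (1 - a - b)
    with hMdef
  clear_value M
  have hM0 : 0 ≤ M := by
    rw [hMdef]
    apply add_nonneg (add_nonneg _ _) hc <;>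
      exact mul_nonneg (by linarith) (Real.exp_pos _).le
  have hMquad : M ≤ 1 + t * m + t^2 * K := by
    have e1 := exp_le_quad hb1
    have e2 := exp_le_quad hb2
    have f1 := mul_le_mul_of_nonneg_left e1 ha.le
    have f2 := mul_le_mul_of_nonneg_left e2 hb.le
    calc M ≤ a * (1 + t * (1/phat22) + (t * (1/phat22))^2) +
          b * (1 + t * (-1/phat21) + (t * (-1/phat21))^2) + (1 - a - b) := by
          rw [hMdef]; exact add_le_add (add_le_add f1 f2) le_rfl
      _ = 1 + t * m + t^2 * K := by rw [hmdef, hKdef]; ring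
  have htKm : t * (2*K) ≤ -m := by
    rw [← le_div_iff₀ (by linarith : (0:ℝ) < 2*K)]
    exact htm
  have hMhalf : M ≤ 1 + t * m / 2 := by
    have : t^2 * K ≤ t * (-m/2) := by
      have h := mul_le_mul_of_nonneg_left htKm ht.le
      linarith only [h]
    linarith [hMquad]
  set δ : ℝ := -(t * m) / 2 with hδdef
  clear_value δ
  have hδ : 0 < δ := by
    rw [hδdef]
    have : t * m < 0 := mul_neg_of_pos_of_neg ht hm
    linarith
  have hMexp : M ≤ Real.exp (-δ) := by
    have := Real.add_one_le_exp (-δ)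
    have h1 : M ≤ 1 - δ := by rw [hδdef] at *; linarith [hMhalf]
    linarith
  set c2 : ℝ := (phat22 * phat21 / (phat22 + phat21))^2 with hc2def
  clear_value c2
  have hc2 : 0 ≤ c2 := by rw [hc2def]; exact sq_nonneg _
  set q : ℝ := 2*(2*c2 + t)/δ with hqdef
  clear_value q
  have hq0 : 0 ≤ q := by
    rw [hqdef]; apply div_nonneg (by linarith) hδ.le
  refine ⟨max 2 ⌈q^2⌉₊, fun n hn => ?_⟩
  have hn2 : 2 ≤ n := le_trans (le_max_left _ _) hn
  have hnq : q^2 ≤ (n:ℝ) := by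
    calc q^2 ≤ (⌈q^2⌉₊ : ℝ) := Nat.le_ceil _
      _ ≤ (n:ℝ) := by
          exact_mod_cast le_trans (le_max_right 2 ⌈q^2⌉₊) hn
  have hs1 : 1 ≤ Real.sqrt n := by
    rw [show (1:ℝ) = Real.sqrt 1 from (Real.sqrt_one).symm]
    apply Real.sqrt_le_sqrt
    exact_mod_cast le_trans (by norm_num) hn2
  have hs2 : Real.sqrt n * Real.sqrt n = (n:ℝ) := Real.mul_self_sqrt (Nat.cast_nonneg n)
  have hs3 : q ≤ Real.sqrt n := by
    calc q = Real.sqrt (q^2) := (Real.sqrt_sq hq0).symm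
      _ ≤ Real.sqrt n := Real.sqrt_le_sqrt hnq
  -- Chernoff bound
  have hint : Integrable (fun ω => Real.exp (t * (∑ i ∈ Finset.range (n-1), Y i) ω)) μ :=
    hindep.integrable_exp_mul_sum hmeas (fun i _ => (hmgf i t).1)
  have hch := measure_ge_le_exp_mul_mgf (μ := μ) (X := ∑ i ∈ Finset.range (n-1), Y i)
    (-1) ht.le hint
  have hmgfsum : mgf (∑ i ∈ Finset.range (n-1), Y i) μ t = M ^ (n-1) := by
    rw [hindep.mgf_sum hmeas]
    have hMi : ∀ i : ℕ, mgf (Y i) μ t = M := fun i => by rw [(hmgf i t).2, hMdef]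
    rw [Finset.prod_congr rfl (fun i _ => hMi i)]
    rw [Finset.prod_const, Finset.card_range]
  rw [hmgfsum] at hch
  have hsetrw : {ω | -1 ≤ (∑ i ∈ Finset.range (n-1), Y i) ω} =
      {ω | (-1:ℝ) ≤ ∑ i ∈ Finset.range (n-1), Y i ω} := by
    ext ω; simp [Finset.sum_apply]
  rw [hsetrw] at hch
  have hsub : μ {ω | 0 < 1 + ∑ i ∈ Finset.range (n - 1), Y i ω} ≤
      μ {ω | (-1:ℝ) ≤ ∑ i ∈ Finset.range (n-1), Y i ω} := by
    apply measure_mono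
    intro ω hω
    simp only [Set.mem_setOf_eq] at *
    linarith
  -- real-number estimate
  have hcast : ((n-1 : ℕ) : ℝ) = (n:ℝ) - 1 := by
    have h1 : 1 ≤ n := by omega
    push_cast [h1]; ring
  have hpow : M ^ (n-1) ≤ Real.exp (-δ * ((n:ℝ) - 1)) := by
    calc M ^ (n-1) ≤ (Real.exp (-δ)) ^ (n-1) := pow_le_pow_left₀ hM0 hMexp _
      _ = Real.exp ((n-1:ℕ) * (-δ)) := (Real.exp_nat_mul _ _).symm
      _ = Real.exp (-δ * ((n:ℝ) - 1)) := by rw [hcast]; ring_nf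
  have hnum : t + (-δ * ((n:ℝ) - 1)) ≤ -2 * c2 * Real.sqrt n := by
    have hqd : 2*(2*c2 + t) ≤ Real.sqrt n * δ := by
      rw [hqdef] at hs3
      rw [div_le_iff₀ hδ] at hs3
      linarith
    have key : 2*(2*c2+t) * Real.sqrt n ≤ δ * (n:ℝ) := by
      have h := mul_le_mul_of_nonneg_right hqd (Real.sqrt_nonneg n)
      have h2 : Real.sqrt n * δ * Real.sqrt n = δ * (n:ℝ) := by
        rw [show Real.sqrt n * δ * Real.sqrt n = δ * (Real.sqrt n * Real.sqrt n) by ring, hs2]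
      linarith [h, h2.le, h2.ge]
    have htsq : t ≤ t * Real.sqrt n := by
      have h := mul_nonneg ht.le (sub_nonneg.mpr hs1)
      linarith only [h]
    have hδn : 0 ≤ δ * ((n:ℝ)/2 - 1) := by
      apply mul_nonneg hδ.le
      have : (2:ℝ) ≤ (n:ℝ) := by exact_mod_cast hn2
      linarith
    linarith only [key, htsq, hδn]
  have hreal : (μ {ω | (-1:ℝ) ≤ ∑ i ∈ Finset.range (n-1), Y i ω}).toReal ≤
      Real.exp (-2 * c2 * Real.sqrt n) := by
    calc (μ {ω | (-1:ℝ) ≤ ∑ i ∈ Finset.range (n-1), Y i ω}).toReal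
        ≤ Real.exp (-t * (-1)) * M ^ (n-1) := hch
      _ ≤ Real.exp t * Real.exp (-δ * ((n:ℝ) - 1)) := by
          rw [show -t * (-1) = t by ring]
          exact mul_le_mul_of_nonneg_left hpow (Real.exp_pos t).le
      _ = Real.exp (t + (-δ * ((n:ℝ) - 1))) := (Real.exp_add _ _).symm
      _ ≤ Real.exp (-2 * c2 * Real.sqrt n) := Real.exp_le_exp.mpr hnum
  calc μ {ω | 0 < 1 + ∑ i ∈ Finset.range (n - 1), Y i ω}
      ≤ μ {ω | (-1:ℝ) ≤ ∑ i ∈ Finset.range (n-1), Y i ω} := hsub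
    _ = ENNReal.ofReal ((μ {ω | (-1:ℝ) ≤ ∑ i ∈ Finset.range (n-1), Y i ω}).toReal) :=
        (ENNReal.ofReal_toReal (measure_ne_top _ _)).symm
    _ ≤ ENNReal.ofReal (Real.exp (-2 * c2 * Real.sqrt n)) := ENNReal.ofReal_le_ofReal hreal
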